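/- Let q:ℝ→ℂ^{d×d} be a continuous integrable matrix-valued function whose Fourier transform q̂(ω)=∫_ℝ q(t)e^{−iωt}dt is integrable, so that q(t)=(1/2π)∫_ℝ q̂(ω)e^{iωt}dω for all t. Let H₁(ω)=∫_0^1 e^{−iωt}dt. Then for every h>0 and every u∈ℤ: ∫_0^h∫_0^h q(uh+t−s)dt ds = (h/2π)∫_{−π}^{π}(∑_{n∈ℤ} H₁(−ω−2πn)·q̂((ω+2πn)/h)·H₁(ω+2πn))·e^{iωu} dω, where the series converges absolutely for almost every ω∈[−π,π]. -/

import Mathlib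

open MeasureTheory Real
open scoped ENNReal NNReal

namespace HawkesPaper

/-- `H₁(ω) = ∫_0^1 e^{−iωt} dt`, the Fourier transform of the indicator of `[0,1]`. -/
noncomputable def H1fun (ω : ℝ) : ℂ :=
  ∫ t in (0 : ℝ)..1, Complex.exp (-Complex.I * ω * t)

/-- the exponential kernel -/
noncomputable def ker (c e : ℝ) (ω s : ℝ) : ℂ :=
  Complex.exp (Complex.I * (ω : ℂ) * ((c : ℂ) + (e : ℂ) * (s : ℂ)))

lemma ker_eq (c e ω s : ℝ) :
    ker c e ω s = Complex.exp (Complex.I * (ω : ℂ) * ((c + e * s : ℝ) : ℂ)) := by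
  unfold ker; push_cast; ring_nf

lemma norm_exp_I_real (r : ℝ) : ‖Complex.exp ((r : ℂ) * Complex.I)‖ = 1 := by
  simp [Complex.norm_exp]

lemma norm_ker (c e ω s : ℝ) : ‖ker c e ω s‖ = 1 := by
  rw [ker_eq, show Complex.I * (ω : ℂ) * ((c + e * s : ℝ) : ℂ)
    = ((ω * (c + e * s) : ℝ) : ℂ) * Complex.I by push_cast; ring, norm_exp_I_real]

lemma contK (c e : ℝ) : Continuous fun p : ℝ × ℝ => ker c e p.1 p.2 := by
  unfold ker; fun_prop

lemma measK {a b : ℝ} (hab : a ≤ b) (c e : ℝ) :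
    StronglyMeasurable fun ω : ℝ => ∫ s in a..b, ker c e ω s := by
  have : (fun ω : ℝ => ∫ s in a..b, ker c e ω s)
      = fun ω : ℝ => ∫ s in Set.Ioc a b, ker c e ω s :=
    funext fun ω => intervalIntegral.integral_of_le hab
  rw [this]
  exact MeasureTheory.StronglyMeasurable.integral_prod_right
    (f := fun (ω : ℝ) (s : ℝ) => ker c e ω s) (contK c e).stronglyMeasurable

lemma normK_le {a b : ℝ} (hab : a ≤ b) (c e : ℝ) (ω : ℝ) :
    ‖∫ s in a..b, ker c e ω s‖ ≤ b - a := by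
  have := intervalIntegral.norm_integral_le_of_norm_le_const (C := 1)
    (f := fun s : ℝ => ker c e ω s) (a := a) (b := b)
    (fun x _ => le_of_eq (norm_ker c e ω x))
  simpa [abs_of_nonneg (sub_nonneg.2 hab)] using this

lemma H1fun_eqK (ω : ℝ) : H1fun ω = ∫ t in (0:ℝ)..1, ker 0 (-1) ω t := by
  have : ∀ t : ℝ, Complex.exp (-Complex.I * ω * t) = ker 0 (-1) ω t := by
    intro t; rw [ker_eq]; congr 1; push_cast; ring
  unfold H1fun
  simp_rw [this]

lemma H1meas : StronglyMeasurable H1fun := by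
  rw [show H1fun = fun ω => ∫ t in (0:ℝ)..1, ker 0 (-1) ω t from funext H1fun_eqK]
  exact measK zero_le_one 0 (-1)

lemma H1norm (ω : ℝ) : ‖H1fun ω‖ ≤ 1 := by
  rw [H1fun_eqK]
  simpa using normK_le zero_le_one 0 (-1) ω

/-- Fubini swap for our kernels. -/
lemma fub (g : ℝ → ℂ) (hg : Integrable g (volume : Measure ℝ)) {b : ℝ} (hb : 0 ≤ b) (c e : ℝ) :
    (∫ s in (0:ℝ)..b, ∫ ω : ℝ, ker c e ω s * g ω)
      = ∫ ω : ℝ, (∫ s in (0:ℝ)..b, ker c e ω s) * g ω := by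
  have hint : Integrable (Function.uncurry fun (s ω : ℝ) => ker c e ω s * g ω)
      (((volume : Measure ℝ).restrict (Set.Ioc 0 b)).prod (volume : Measure ℝ)) := by
    refine (integrable_prod_iff ?_).2 ⟨?_, ?_⟩
    · exact ((contK c e).comp (continuous_swap)).aestronglyMeasurable.mul hg.1.comp_snd
    · refine Filter.Eventually.of_forall fun s => ?_
      exact hg.bdd_mul ((contK c e).comp (continuous_id.prodMk continuous_const)).aestronglyMeasurable
        (Filter.Eventually.of_forall fun ω => le_of_eq (norm_ker c e ω s))
    · simp only [Function.uncurry]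
      have : ∀ s : ℝ, (∫ ω : ℝ, ‖ker c e ω s * g ω‖) = ∫ ω : ℝ, ‖g ω‖ := by
        intro s
        congr 1
        funext ω
        rw [norm_mul, norm_ker, one_mul]
      simp_rw [this]
      exact integrable_const _
  have swap := MeasureTheory.integral_integral_swap (f := fun (s ω : ℝ) => ker c e ω s * g ω) hint
  rw [intervalIntegral.integral_of_le hb]
  rw [swap]
  congr 1
  funext ω
  rw [← intervalIntegral.integral_mul_const, intervalIntegral.integral_of_le hb]

lemma cover_univ : (⋃ n : ℤ, Set.Ioc (-π + 2*π*(n:ℝ)) (π + 2*π*(n:ℝ))) = Set.univ := by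
  ext x
  simp only [Set.mem_iUnion, Set.mem_univ, iff_true, Set.mem_Ioc]
  obtain ⟨m, hm, -⟩ := existsUnique_add_zsmul_mem_Ioc Real.two_pi_pos x (-π)
  refine ⟨-m, ?_, ?_⟩ <;>
  · have h1 := hm.1
    have h2 := hm.2
    simp only [zsmul_eq_mul] at h1 h2
    push_cast at h1 h2 ⊢
    linarith

lemma disj : Pairwise (Function.onFun Disjoint
    (fun n : ℤ => Set.Ioc (-π + 2*π*(n:ℝ)) (π + 2*π*(n:ℝ)))) := by
  intro m n hmn
  rw [Function.onFun, Set.Ioc_disjoint_Ioc]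
  rcases lt_or_gt_of_ne hmn with hlt | hlt
  · have : (m:ℝ) + 1 ≤ n := by exact_mod_cast Int.add_one_le_iff.2 hlt
    refine le_trans (min_le_left _ _) (le_trans ?_ (le_max_right _ _))
    nlinarith [pi_pos]
  · have : (n:ℝ) + 1 ≤ m := by exact_mod_cast Int.add_one_le_iff.2 hlt
    refine le_trans (min_le_right _ _) (le_trans ?_ (le_max_left _ _))
    nlinarith [pi_pos]

lemma translate_meas {g : ℝ → ℂ} (hg : AEStronglyMeasurable g (volume : Measure ℝ)) (c : ℝ) :
    AEStronglyMeasurable (fun x => g (x + c)) (volume : Measure ℝ) :=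
  hg.comp_quasiMeasurePreserving
    (measurePreserving_add_right (volume : Measure ℝ) c).quasiMeasurePreserving

lemma translate_lintegral (g : ℝ → ℂ) (c : ℝ) :
    (∫⁻ x in Set.Ioc (-π) π, ‖g (x + c)‖₊) = ∫⁻ x in Set.Ioc (-π + c) (π + c), ‖g x‖₊ := by
  have hemb : MeasurableEmbedding (fun x : ℝ => x + c) :=
    (Homeomorph.addRight c).measurableEmbedding
  have := (measurePreserving_add_right (volume : Measure ℝ) c).setLIntegral_comp_preimage_emb hemb
    (fun x => (‖g x‖₊ : ℝ≥0∞)) (Set.Ioc (-π + c) (π + c))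
  have hset : (fun x : ℝ => x + c) ⁻¹' Set.Ioc (-π + c) (π + c) = Set.Ioc (-π) π := by
    ext x
    simp only [Set.mem_preimage, Set.mem_Ioc]
    constructor <;> exact fun ⟨h1, h2⟩ => ⟨by linarith, by linarith⟩
  rw [← this, hset]

lemma fold_key {g : ℝ → ℂ} (hg : Integrable g (volume : Measure ℝ)) :
    (∑' n : ℤ, ∫⁻ x in Set.Ioc (-π) π, ‖g (x + 2*π*(n:ℝ))‖₊) = ∫⁻ x, ‖g x‖₊ := by
  have h1 : ∀ n : ℤ, (∫⁻ x in Set.Ioc (-π) π, ‖g (x + 2*π*(n:ℝ))‖₊)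
      = ∫⁻ x in Set.Ioc (-π + 2*π*(n:ℝ)) (π + 2*π*(n:ℝ)), ‖g x‖₊ :=
    fun n => translate_lintegral g _
  simp_rw [h1]
  rw [← lintegral_iUnion (fun n => measurableSet_Ioc) disj, cover_univ, Measure.restrict_univ]

lemma fold_summable {g : ℝ → ℂ} (hg : Integrable g (volume : Measure ℝ)) :
    ∀ᵐ x ∂((volume : Measure ℝ).restrict (Set.Ioc (-π) π)),
      Summable fun n : ℤ => ‖g (x + 2*π*(n:ℝ))‖ := by
  have hmeas : ∀ n : ℤ, AEMeasurable (fun x => (‖g (x + 2*π*(n:ℝ))‖₊ : ℝ≥0∞))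
      ((volume : Measure ℝ).restrict (Set.Ioc (-π) π)) :=
    fun n => ((translate_meas hg.1 _).restrict).nnnorm.aemeasurable.coe_nnreal_ennreal
  have h2 : (∫⁻ x in Set.Ioc (-π) π, ∑' n : ℤ, (‖g (x + 2*π*(n:ℝ))‖₊ : ℝ≥0∞)) ≠ ⊤ := by
    rw [lintegral_tsum hmeas, fold_key hg]
    exact hg.2.ne
  have h3 := ae_lt_top' (AEMeasurable.ennreal_tsum hmeas) h2
  filter_upwards [h3] with x hx
  have hne : (∑' n : ℤ, (‖g (x + 2*π*(n:ℝ))‖₊ : ℝ≥0∞)) ≠ ⊤ := hx.ne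
  have hsum : Summable fun n : ℤ => ‖g (x + 2*π*(n:ℝ))‖₊ :=
    ENNReal.tsum_coe_ne_top_iff_summable.1 hne
  exact (NNReal.summable_coe.2 hsum).congr (fun n => by simp [coe_nnnorm])

lemma fold_integral {g : ℝ → ℂ} (hg : Integrable g (volume : Measure ℝ)) :
    (∫ x, g x) = ∫ x in Set.Ioc (-π) π, ∑' n : ℤ, g (x + 2*π*(n:ℝ)) := by
  have hpi : (-π : ℝ) ≤ π := by linarith [pi_pos]
  have htrans : ∀ n : ℤ, (∫ x in Set.Ioc (-π + 2*π*(n:ℝ)) (π + 2*π*(n:ℝ)), g x)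
      = ∫ x in Set.Ioc (-π) π, g (x + 2*π*(n:ℝ)) := by
    intro n
    rw [← intervalIntegral.integral_of_le (by linarith : -π + 2*π*(n:ℝ) ≤ π + 2*π*(n:ℝ)),
      ← intervalIntegral.integral_comp_add_right g (2*π*(n:ℝ)),
      intervalIntegral.integral_of_le hpi]
  have hmeas : ∀ n : ℤ, AEStronglyMeasurable (fun x => g (x + 2*π*(n:ℝ)))
      ((volume : Measure ℝ).restrict (Set.Ioc (-π) π)) :=
    fun n => (translate_meas hg.1 _).restrict
  have hne : (∑' n : ℤ, ∫⁻ x in Set.Ioc (-π) π, ‖g (x + 2*π*(n:ℝ))‖₊) ≠ ⊤ := by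
    rw [fold_key hg]; exact hg.2.ne
  calc (∫ x, g x) = ∫ x in Set.univ, g x := by rw [Measure.restrict_univ]
    _ = ∫ x in ⋃ n : ℤ, Set.Ioc (-π + 2*π*(n:ℝ)) (π + 2*π*(n:ℝ)), g x := by rw [cover_univ]
    _ = ∑' n : ℤ, ∫ x in Set.Ioc (-π + 2*π*(n:ℝ)) (π + 2*π*(n:ℝ)), g x := by
        exact integral_iUnion (fun n => measurableSet_Ioc) disj
          (by rw [cover_univ]; exact hg.integrableOn)
    _ = ∑' n : ℤ, ∫ x in Set.Ioc (-π) π, g (x + 2*π*(n:ℝ)) := by simp_rw [htrans]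
    _ = ∫ x in Set.Ioc (-π) π, ∑' n : ℤ, g (x + 2*π*(n:ℝ)) := (integral_tsum hmeas hne).symm


/-- **folded/aliased spectrum of binned covariances.** Let `q : ℝ → ℂ^{d×d}` be
continuous and (componentwise) integrable with integrable Fourier transform
`q̂(ω) = ∫ q(t) e^{−iωt} dt`, so that the inversion formula
`q(t) = (1/2π) ∫ q̂(ω) e^{iωt} dω` holds for all `t`. Then for every `h > 0` and `u ∈ ℤ`:
`∫_0^h ∫_0^h q(uh+t−s) dt ds
  = (h/2π) ∫_{−π}^{π} (∑_{n∈ℤ} H₁(−ω−2πn) q̂((ω+2πn)/h) H₁(ω+2πn)) e^{iωu} dω`,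
the series converging absolutely for almost every `ω ∈ [−π, π]`. -/
theorem binned_covariance_folded_spectrum
    {d : ℕ} (q : ℝ → Matrix (Fin d) (Fin d) ℂ)
    (hq_cont : ∀ i j, Continuous fun t => q t i j)
    (hq_int : ∀ i j, Integrable (fun t => q t i j) (volume : Measure ℝ))
    (qhat : ℝ → Matrix (Fin d) (Fin d) ℂ)
    (hqhat : ∀ (ω : ℝ) (i j : Fin d),
      qhat ω i j = ∫ t : ℝ, Complex.exp (-Complex.I * ω * t) * q t i j)
    (hqhat_int : ∀ i j, Integrable (fun ω => qhat ω i j) (volume : Measure ℝ))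
    (hinv : ∀ (t : ℝ) (i j : Fin d),
      q t i j = ((1 / (2 * π) : ℝ) : ℂ) *
        ∫ ω : ℝ, Complex.exp (Complex.I * ω * t) * qhat ω i j)
    (h : ℝ) (hh : 0 < h) (u : ℤ) :
    (∀ᵐ ω ∂((volume : Measure ℝ).restrict (Set.Icc (-π) π)), ∀ i j : Fin d,
      Summable fun n : ℤ =>
        ‖H1fun (-(ω + 2 * π * n)) * qhat ((ω + 2 * π * n) / h) i j *
          H1fun (ω + 2 * π * n)‖) ∧
    ∀ i j : Fin d,
      (∫ t in (0 : ℝ)..h, ∫ s in (0 : ℝ)..h, q ((u : ℝ) * h + t - s) i j) =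
        ((h / (2 * π) : ℝ) : ℂ) *
          ∫ ω in (-π : ℝ)..π,
            (∑' n : ℤ, H1fun (-(ω + 2 * π * n)) * qhat ((ω + 2 * π * n) / h) i j *
              H1fun (ω + 2 * π * n)) * Complex.exp (Complex.I * ω * u) := by
  have hpi : (-π : ℝ) ≤ π := by linarith [pi_pos]
  -- integrability of the folded integrand
  have hfI_int : ∀ i j : Fin d,
      Integrable (fun x : ℝ => H1fun (-x) * qhat (x / h) i j * H1fun x) (volume : Measure ℝ) := by
    intro i j
    have base : Integrable (fun x : ℝ => qhat (x / h) i j) (volume : Measure ℝ) :=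
      (hqhat_int i j).comp_div hh.ne'
    have step1 : Integrable (fun x : ℝ => H1fun (-x) * qhat (x / h) i j) (volume : Measure ℝ) :=
      base.bdd_mul ((H1meas.comp_measurable measurable_neg).aestronglyMeasurable)
        (Filter.Eventually.of_forall fun x => H1norm (-x))
    have step2 : Integrable (fun x : ℝ => H1fun x * (H1fun (-x) * qhat (x / h) i j))
        (volume : Measure ℝ) :=
      step1.bdd_mul H1meas.aestronglyMeasurable (Filter.Eventually.of_forall fun x => H1norm x)
    exact step2.congr (Filter.Eventually.of_forall fun x => by ring)
  -- integrability with the extra exponential factor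
  have hG_int : ∀ i j : Fin d,
      Integrable (fun x : ℝ => (H1fun (-x) * qhat (x / h) i j * H1fun x) *
        Complex.exp (Complex.I * x * u)) (volume : Measure ℝ) := by
    intro i j
    have hbd : ∀ x : ℝ, ‖Complex.exp (Complex.I * (x:ℂ) * (u:ℂ))‖ ≤ 1 := by
      intro x
      rw [show Complex.I * (x:ℂ) * (u:ℂ) = ((x * u : ℝ) : ℂ) * Complex.I by push_cast; ring,
        norm_exp_I_real]
    have hcont : Continuous fun x : ℝ => Complex.exp (Complex.I * (x:ℂ) * (u:ℂ)) := by fun_prop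
    have := (hfI_int i j).bdd_mul hcont.aestronglyMeasurable (Filter.Eventually.of_forall hbd)
    exact this.congr (Filter.Eventually.of_forall fun x => by ring)
  constructor
  · -- a.e. summability
    rw [show ((volume : Measure ℝ).restrict (Set.Icc (-π) π))
        = (volume : Measure ℝ).restrict (Set.Ioc (-π) π) from
      (Measure.restrict_congr_set Ioc_ae_eq_Icc).symm]
    rw [MeasureTheory.ae_all_iff]
    intro i
    rw [MeasureTheory.ae_all_iff]
    intro j
    filter_upwards [fold_summable (hfI_int i j)] with x hx
    exact hx.congr fun n => rfl
  · -- the identity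
    intro i j
    set c0 : ℂ := ((1 / (2 * π) : ℝ) : ℂ) with hc0
    have hg : Integrable (fun ω : ℝ => qhat ω i j) (volume : Measure ℝ) := hqhat_int i j
    -- the auxiliary integrable function g₂
    set g2 : ℝ → ℂ := fun ω =>
      Complex.exp (Complex.I * (ω:ℂ) * (((u:ℝ) * h : ℝ) : ℂ)) *
        (∫ s in (0:ℝ)..h, ker 0 (-1) ω s) * qhat ω i j with hg2def
    have hg2 : Integrable g2 (volume : Measure ℝ) := by
      have hm : AEStronglyMeasurable
          (fun ω : ℝ => Complex.exp (Complex.I * (ω:ℂ) * (((u:ℝ) * h : ℝ) : ℂ)) *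
            (∫ s in (0:ℝ)..h, ker 0 (-1) ω s)) (volume : Measure ℝ) := by
        refine Continuous.aestronglyMeasurable ?_ |>.mul (measK hh.le 0 (-1)).aestronglyMeasurable
        fun_prop
      have hbd : ∀ ω : ℝ, ‖Complex.exp (Complex.I * (ω:ℂ) * (((u:ℝ) * h : ℝ) : ℂ)) *
          (∫ s in (0:ℝ)..h, ker 0 (-1) ω s)‖ ≤ h := by
        intro ω
        rw [norm_mul, show Complex.I * (ω:ℂ) * (((u:ℝ) * h : ℝ) : ℂ)
          = ((ω * ((u:ℝ) * h) : ℝ) : ℂ) * Complex.I by push_cast; ring, norm_exp_I_real, one_mul]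
        simpa using normK_le hh.le 0 (-1) ω
      have := hg.bdd_mul hm (Filter.Eventually.of_forall hbd)
      exact this.congr (Filter.Eventually.of_forall fun x => by rw [hg2def])
    -- Step A: express the double integral as a full-line frequency integral
    have keyA : (∫ t in (0 : ℝ)..h, ∫ s in (0 : ℝ)..h, q ((u : ℝ) * h + t - s) i j)
        = ((h / (2 * π) : ℝ) : ℂ) *
          ∫ x : ℝ, (H1fun (-x) * qhat (x / h) i j * H1fun x) *
            Complex.exp (Complex.I * x * u) := by
      have hq1 : ∀ t s : ℝ, q ((u : ℝ) * h + t - s) i j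
          = c0 * ∫ ω : ℝ, ker ((u:ℝ) * h + t) (-1) ω s * qhat ω i j := by
        intro t s
        rw [hinv ((u : ℝ) * h + t - s) i j]
        congr 1
        refine integral_congr_ae (Filter.Eventually.of_forall fun ω => ?_)
        show Complex.exp (Complex.I * (ω:ℂ) * (((u:ℝ) * h + t - s : ℝ):ℂ)) * qhat ω i j
          = ker ((u:ℝ) * h + t) (-1) ω s * qhat ω i j
        rw [ker_eq]
        congr 2
        push_cast
        ring
      have fb1 : ∀ t : ℝ,
          (∫ s in (0:ℝ)..h, c0 * ∫ ω : ℝ, ker ((u:ℝ) * h + t) (-1) ω s * qhat ω i j)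
          = c0 * ∫ ω : ℝ, (∫ s in (0:ℝ)..h, ker ((u:ℝ) * h + t) (-1) ω s) * qhat ω i j := by
        intro t
        rw [intervalIntegral.integral_const_mul, fub _ hg hh.le _ _]
      have key2 : ∀ t ω : ℝ, (∫ s in (0:ℝ)..h, ker ((u:ℝ) * h + t) (-1) ω s) * qhat ω i j
          = ker 0 1 ω t * g2 ω := by
        intro t ω
        have hsplit : ∀ s : ℝ, ker ((u:ℝ) * h + t) (-1) ω s
            = Complex.exp (Complex.I * (ω:ℂ) * (((u:ℝ) * h : ℝ) : ℂ)) *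
                Complex.exp (Complex.I * (ω:ℂ) * ((t : ℝ) : ℂ)) * ker 0 (-1) ω s := by
          intro s
          rw [ker_eq, ker_eq, ← Complex.exp_add, ← Complex.exp_add]
          congr 1
          push_cast; ring
        have hker01 : ker 0 1 ω t = Complex.exp (Complex.I * (ω:ℂ) * ((t : ℝ) : ℂ)) := by
          rw [ker_eq]; norm_num
        simp_rw [hsplit]
        rw [intervalIntegral.integral_const_mul, hg2def, hker01]
        ring
      have fb2 :
          (∫ t in (0:ℝ)..h, c0 * ∫ ω : ℝ, ker 0 1 ω t * g2 ω)
          = c0 * ∫ ω : ℝ, (∫ t in (0:ℝ)..h, ker 0 1 ω t) * g2 ω := by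
        rw [intervalIntegral.integral_const_mul, fub g2 hg2 hh.le 0 1]
      -- change of variables ω ↦ ω/h
      set Φ : ℝ → ℂ := fun ω => (∫ t in (0:ℝ)..h, ker 0 1 ω t) * g2 ω with hΦdef
      have hcv : (∫ ω : ℝ, Φ ω) = h⁻¹ • ∫ x : ℝ, Φ (x / h) := by
        rw [MeasureTheory.Measure.integral_comp_div Φ h, smul_smul, abs_of_pos hh,
          inv_mul_cancel₀ hh.ne', one_smul]
      have hΦval : ∀ x : ℝ, Φ (x / h)
          = (h:ℂ)^2 * ((H1fun (-x) * qhat (x / h) i j * H1fun x) *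
              Complex.exp (Complex.I * x * u)) := by
        intro x
        have hL : (∫ t in (0:ℝ)..h, ker 0 1 (x / h) t) = (h:ℂ) * H1fun (-x) := by
          have hs := intervalIntegral.integral_comp_mul_right (a := (0:ℝ)) (b := 1)
            (fun t => ker 0 1 (x / h) t) hh.ne'
          simp only [zero_mul, one_mul] at hs
          rw [show (∫ t in (0:ℝ)..h, ker 0 1 (x / h) t)
              = (h:ℝ) • ∫ t in (0:ℝ)..1, ker 0 1 (x / h) (t * h) from by
            rw [hs, smul_smul, mul_inv_cancel₀ hh.ne', one_smul]]
          rw [H1fun_eqK, Complex.real_smul]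
          congr 1
          have : ∀ t : ℝ, ker 0 1 (x / h) (t * h) = ker 0 (-1) (-x) t := by
            intro t
            rw [ker_eq, ker_eq]
            congr 1
            push_cast
            field_simp [Complex.ofReal_ne_zero.mpr hh.ne']
            ring
          simp_rw [this]
        have hK : (∫ s in (0:ℝ)..h, ker 0 (-1) (x / h) s) = (h:ℂ) * H1fun x := by
          have hs := intervalIntegral.integral_comp_mul_right (a := (0:ℝ)) (b := 1)
            (fun s => ker 0 (-1) (x / h) s) hh.ne'
          simp only [zero_mul, one_mul] at hs
          rw [show (∫ s in (0:ℝ)..h, ker 0 (-1) (x / h) s)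
              = (h:ℝ) • ∫ s in (0:ℝ)..1, ker 0 (-1) (x / h) (s * h) from by
            rw [hs, smul_smul, mul_inv_cancel₀ hh.ne', one_smul]]
          rw [H1fun_eqK, Complex.real_smul]
          congr 1
          have : ∀ s : ℝ, ker 0 (-1) (x / h) (s * h) = ker 0 (-1) x s := by
            intro s
            rw [ker_eq, ker_eq]
            congr 1
            push_cast
            field_simp [Complex.ofReal_ne_zero.mpr hh.ne']
            ring
          simp_rw [this]
        have hE : Complex.exp (Complex.I * ((x / h : ℝ):ℂ) * (((u:ℝ) * h : ℝ) : ℂ))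
            = Complex.exp (Complex.I * (x:ℂ) * (u:ℂ)) := by
          congr 1
          push_cast
          field_simp [Complex.ofReal_ne_zero.mpr hh.ne']
        rw [hΦdef]
        simp only []
        rw [hg2def]
        simp only []
        rw [hL, hK, hE]
        ring
      calc (∫ t in (0 : ℝ)..h, ∫ s in (0 : ℝ)..h, q ((u : ℝ) * h + t - s) i j)
          = ∫ t in (0:ℝ)..h, ∫ s in (0:ℝ)..h,
              c0 * ∫ ω : ℝ, ker ((u:ℝ) * h + t) (-1) ω s * qhat ω i j := by
            simp_rw [hq1]
        _ = ∫ t in (0:ℝ)..h,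
              c0 * ∫ ω : ℝ, (∫ s in (0:ℝ)..h, ker ((u:ℝ) * h + t) (-1) ω s) * qhat ω i j := by
            simp_rw [fb1]
        _ = ∫ t in (0:ℝ)..h, c0 * ∫ ω : ℝ, ker 0 1 ω t * g2 ω := by
            simp_rw [key2]
        _ = c0 * ∫ ω : ℝ, Φ ω := fb2
        _ = c0 * (h⁻¹ • ∫ x : ℝ, Φ (x / h)) := by rw [hcv]
        _ = c0 * (h⁻¹ • ((h:ℂ)^2 * ∫ x : ℝ, (H1fun (-x) * qhat (x / h) i j * H1fun x) *
              Complex.exp (Complex.I * x * u))) := by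
            simp_rw [hΦval]
            rw [MeasureTheory.integral_const_mul]
        _ = ((h / (2 * π) : ℝ) : ℂ) *
              ∫ x : ℝ, (H1fun (-x) * qhat (x / h) i j * H1fun x) *
                Complex.exp (Complex.I * x * u) := by
            rw [Complex.real_smul, hc0]
            push_cast
            have hπ : (π : ℂ) ≠ 0 := by exact_mod_cast Real.pi_ne_zero
            have hhc : (h : ℂ) ≠ 0 := by exact_mod_cast hh.ne'
            field_simp
            congr 1; funext x; ring_nf
    rw [keyA, fold_integral (hG_int i j)]
    congr 1
    rw [← intervalIntegral.integral_of_le hpi]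
    refine intervalIntegral.integral_congr fun x _ => ?_
    rw [← tsum_mul_right]
    refine tsum_congr fun n => ?_
    have hper : Complex.exp (Complex.I * ((x + 2*π*(n:ℝ) : ℝ) : ℂ) * (u:ℂ))
        = Complex.exp (Complex.I * (x:ℂ) * (u:ℂ)) := by
      rw [show Complex.I * ((x + 2*π*(n:ℝ) : ℝ) : ℂ) * (u:ℂ)
          = Complex.I * (x:ℂ) * (u:ℂ) + ((n * u : ℤ) : ℂ) * (2 * (π:ℂ) * Complex.I) by
        push_cast; ring, Complex.exp_add, Complex.exp_int_mul_two_pi_mul_I, mul_one]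
    rw [hper]


end HawkesPaper
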